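/- Let p be prime and C the basic p×p circulant permutation matrix (C^p = I). The (p−1)p × (p−1)p block matrix N = [C^{ij}] (i, j = 1,…,p−1) satisfies NNᵀ = (p−1)·I_{(p−1)p} + ((J−I)_{p−1} ⊗ (J−I)_p); i.e. N is the incidence matrix of a symmetric rectangular design with v = p(p−1), k = p−1, λ₁ = λ₂ = 0, λ₃ = 1, m = p−1, n = p. -/

import Mathlib

open Matrix Kronecker

def Jmat (α : Type*) [Fintype α] : Matrix α α ℝ := Matrix.of fun _ _ => 1

lemma Cpow_aux (p : ℕ) [NeZero p] (C : Matrix (ZMod p) (ZMod p) ℝ)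
    (hC : C = Matrix.of fun x y => if y = x + 1 then 1 else 0) (n : ℕ) :
    C ^ n = Matrix.of fun x y => if y = x + (n : ZMod p) then 1 else 0 := by
  induction n with
  | zero => ext x y; simp [Matrix.one_apply, eq_comm]
  | succ n ih =>
    rw [pow_succ, ih, hC]
    ext x y
    simp only [Matrix.mul_apply, Matrix.of_apply]
    rw [Finset.sum_eq_single (x + (n : ZMod p))]
    · push_cast; simp [add_assoc]
    · intro b _ hb; simp [hb]
    · simp

lemma count_aux (p : ℕ) [Fact p.Prime] (u : ZMod p) :
    (∑ j : Fin (p - 1), if ((j.val + 1 : ℕ) : ZMod p) = u then (1:ℝ) else 0)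
      = if u = 0 then 0 else 1 := by
  have hp1 : 1 ≤ p := (Fact.out (p := p.Prime)).one_lt.le
  by_cases hu : u = 0
  · subst hu
    rw [if_pos rfl, Finset.sum_eq_zero]
    intro j _
    have : ¬ ((j.val + 1 : ℕ) : ZMod p) = 0 := by
      rw [ZMod.natCast_eq_zero_iff]
      intro h
      have := Nat.le_of_dvd (Nat.succ_pos _) h
      omega
    rw [if_neg this]
  · rw [if_neg hu]
    have huval : 1 ≤ u.val := by
      rcases Nat.eq_zero_or_pos u.val with h | h
      · exact absurd (by rwa [← ZMod.val_eq_zero]) hu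
      · exact h
    have hvlt : u.val < p := ZMod.val_lt u
    have hj : u.val - 1 < p - 1 := by omega
    rw [Finset.sum_eq_single (⟨u.val - 1, hj⟩ : Fin (p - 1))]
    · rw [if_pos]
      simp only
      have : u.val - 1 + 1 = u.val := by omega
      rw [this, ZMod.natCast_val, ZMod.cast_id]
    · intro b _ hb
      rw [if_neg]
      intro h
      apply hb
      have hblt : b.val + 1 < p := by have := b.isLt; omega
      have := ZMod.val_cast_of_lt hblt
      rw [h] at this
      apply Fin.ext
      simp only
      omega
    · simp

/-- Corollary 11(i): for `p` prime and `C` the basic circulant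
permutation matrix of order `p`, the block matrix `N = [C^{ij}]`
(`i, j = 1,…,p−1`) satisfies `NNᵀ = (p−1)·I + (J−I)_{p−1} ⊗ (J−I)_p`, i.e. it
is the incidence matrix of a symmetric rectangular design with
`v = p(p−1)`, `k = p−1`, `λ₁ = λ₂ = 0`, `λ₃ = 1`. -/
theorem circulant_powers_RD (p : ℕ) [hp : Fact p.Prime] [NeZero p]
    (C : Matrix (ZMod p) (ZMod p) ℝ)
    (hC : C = Matrix.of fun x y => if y = x + 1 then 1 else 0)
    (N : Matrix (Fin (p - 1) × ZMod p) (Fin (p - 1) × ZMod p) ℝ)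
    (hN : N = fun a b => (C ^ ((a.1.val + 1) * (b.1.val + 1))) a.2 b.2) :
    N * Nᵀ = ((p : ℝ) - 1) • (1 : Matrix (Fin (p - 1) × ZMod p) (Fin (p - 1) × ZMod p) ℝ)
      + (Jmat (Fin (p - 1)) - 1) ⊗ₖ (Jmat (ZMod p) - 1) := by
  have hp1 : 1 < p := (Fact.out (p := p.Prime)).one_lt
  ext ⟨i, x⟩ ⟨k, z⟩
  rw [Matrix.mul_apply, Fintype.sum_prod_type]
  simp only [Matrix.transpose_apply]
  simp only [hN, Matrix.transpose_apply, Cpow_aux p C hC, Matrix.of_apply]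
  have inner : ∀ j : Fin (p-1),
      (∑ y : ZMod p,
        (if y = x + (((i.val+1)*(j.val+1) : ℕ) : ZMod p) then (1:ℝ) else 0) *
        (if y = z + (((k.val+1)*(j.val+1) : ℕ) : ZMod p) then 1 else 0))
      = if x + (((i.val+1)*(j.val+1) : ℕ) : ZMod p)
            = z + (((k.val+1)*(j.val+1) : ℕ) : ZMod p) then 1 else 0 := by
    intro j
    rw [Finset.sum_eq_single (x + (((i.val+1)*(j.val+1) : ℕ) : ZMod p))]
    · simp
    · intro b _ hb; rw [if_neg hb, zero_mul]
    · simp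
  rw [Finset.sum_congr rfl fun j _ => inner j]
  -- RHS simplification
  simp only [Matrix.add_apply, Matrix.smul_apply, Matrix.one_apply,
    Matrix.kroneckerMap_apply, Matrix.sub_apply, Jmat, Matrix.of_apply,
    Prod.mk.injEq, smul_eq_mul]
  by_cases hik : i = k
  · subst hik
    simp only [add_left_inj, true_and, sub_self, zero_mul, add_zero]
    by_cases hxz : x = z
    · subst hxz
      simp only [if_pos rfl, and_self, mul_one, Finset.sum_const,
        Finset.card_univ, Fintype.card_fin, nsmul_eq_mul, mul_one]
      push_cast [Nat.cast_sub hp1.le]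
      ring
    · simp [hxz]
  · -- i ≠ k case
    have hvi : i.val + 1 < p := by have := i.isLt; omega
    have hvk : k.val + 1 < p := by have := k.isLt; omega
    set a : ZMod p := ((i.val + 1 : ℕ) : ZMod p) with ha
    set b : ZMod p := ((k.val + 1 : ℕ) : ZMod p) with hb
    have hd : b - a ≠ 0 := by
      intro h
      apply hik
      have hba : b = a := sub_eq_zero.mp h
      rw [ha, hb] at hba
      have := congrArg ZMod.val hba
      rw [ZMod.val_cast_of_lt hvi, ZMod.val_cast_of_lt hvk] at this
      exact Fin.ext (by omega)
    have key : ∀ j : Fin (p-1),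
        (x + (((i.val+1)*(j.val+1) : ℕ) : ZMod p)
          = z + (((k.val+1)*(j.val+1) : ℕ) : ZMod p))
        ↔ (((j.val + 1 : ℕ) : ZMod p) = (b - a)⁻¹ * (x - z)) := by
      intro j
      have hcast1 : (((i.val+1)*(j.val+1) : ℕ) : ZMod p)
          = a * ((j.val + 1 : ℕ) : ZMod p) := by push_cast [ha]; ring
      have hcast2 : (((k.val+1)*(j.val+1) : ℕ) : ZMod p)
          = b * ((j.val + 1 : ℕ) : ZMod p) := by push_cast [hb]; ring
      rw [hcast1, hcast2, eq_inv_mul_iff_mul_eq₀ hd]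
      constructor
      · intro h; linear_combination -h
      · intro h; linear_combination -h
    rw [Finset.sum_congr rfl fun j _ => if_congr (key j) rfl rfl]
    rw [count_aux p ((b - a)⁻¹ * (x - z))]
    have hinv : (b - a)⁻¹ ≠ 0 := inv_ne_zero hd
    have hcond : ((b - a)⁻¹ * (x - z) = 0) ↔ x = z := by
      rw [mul_eq_zero, sub_eq_zero]
      simp [hinv]
    simp only [hik, false_and, if_false, mul_zero, add_zero, zero_add]
    by_cases hxz : x = z
    · rw [if_pos (hcond.mpr hxz), if_pos hxz]; ring
    · rw [if_neg (fun h => hxz (hcond.mp h)), if_neg hxz]; ring
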